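/- Let N be a positive integer and y ∈ (0,1). For λ ∈ ℂ with 1 + λ ≠ 0 and Δ := 1 + λ(1−y) ≠ 0, define G_N(λ, y) := [ 1 + (1−y) ( (N(1−y)(1+λ) + 1) Σ_{i=0}^{N} Δ^i − 1 ) Δ^{−(N+1)} ] (1+λ)^{−1}. Then for every real ω ≠ 0, |G_N(iω, y)| < 1 + N(1−y) + N(N+1)(1−y)². -/

import Mathlib

theorem stmt14 (N : ℕ) (hN : 1 ≤ N) (y : ℝ) (hy : y ∈ Set.Ioo (0 : ℝ) 1)
    (ω : ℝ) (hω : ω ≠ 0) :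
    norm
        ((1 + (1 - (y : ℂ)) *
            ((((N : ℂ) * (1 - (y : ℂ)) * (1 + Complex.I * (ω : ℂ)) + 1) *
                  (∑ i ∈ Finset.range (N + 1),
                    (1 + Complex.I * (ω : ℂ) * (1 - (y : ℂ))) ^ i) - 1) *
              ((1 + Complex.I * (ω : ℂ) * (1 - (y : ℂ))) ^ (N + 1))⁻¹)) *
          (1 + Complex.I * (ω : ℂ))⁻¹)
      < 1 + (N : ℝ) * (1 - y) + (N : ℝ) * ((N : ℝ) + 1) * (1 - y) ^ 2 := by
  obtain ⟨hy0, hy1⟩ := hy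
  set Δ : ℂ := 1 + Complex.I * (ω : ℂ) * (1 - (y : ℂ)) with hΔdef
  set s : ℂ := ∑ i ∈ Finset.range (N + 1), Δ ^ i with hsdef
  have hΔre : Δ.re = 1 := by simp [hΔdef]
  have hΔim : Δ.im = ω * (1 - y) := by simp [hΔdef]
  have hωa : ω * (1 - y) ≠ 0 := by
    apply mul_ne_zero hω; linarith
  have hA2 : norm Δ ^ 2 = 1 + (ω * (1 - y))^2 := by
    rw [Complex.sq_norm, Complex.normSq_apply, hΔre, hΔim]; ring
  have hA : 1 < norm Δ := by
    have h1 : 0 < (ω * (1 - y))^2 := by positivity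
    nlinarith [norm_nonneg Δ]
  have hB2 : norm (1 + Complex.I * (ω : ℂ)) ^ 2 = 1 + ω ^ 2 := by
    rw [Complex.sq_norm, Complex.normSq_apply]; simp; ring
  have hB : 1 < norm (1 + Complex.I * (ω : ℂ)) := by
    have h1 : 0 < ω ^ 2 := by positivity
    nlinarith [norm_nonneg (1 + Complex.I * (ω : ℂ))]
  have hΔ0 : Δ ≠ 0 := by
    intro h; rw [h] at hA; simp at hA; linarith
  have hB0 : (1 + Complex.I * (ω : ℂ)) ≠ 0 := by
    intro h; rw [h] at hB; simp at hB; linarith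
  have hΔp : Δ ^ (N + 1) ≠ 0 := pow_ne_zero _ hΔ0
  have hΔ1 : Δ - 1 = Complex.I * (ω : ℂ) * (1 - (y : ℂ)) := by rw [hΔdef]; ring
  have hgs : s * (Complex.I * (ω : ℂ) * (1 - (y : ℂ))) = Δ ^ (N + 1) - 1 := by
    rw [← hΔ1]; exact geom_sum_mul Δ (N + 1)
  have key2 : (1 + (1 - (y : ℂ)) *
            ((((N : ℂ) * (1 - (y : ℂ)) * (1 + Complex.I * (ω : ℂ)) + 1) * s - 1) *
              (Δ ^ (N + 1))⁻¹)) * (1 + Complex.I * (ω : ℂ))⁻¹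
      - ((y : ℂ) * (Δ ^ (N + 1))⁻¹ * (1 + Complex.I * (ω : ℂ))⁻¹
        + ((N : ℂ) * (1 - (y : ℂ)) + 1) * (1 - (y : ℂ)) * s * (Δ ^ (N + 1))⁻¹)
      = ((Δ ^ (N + 1) - 1) - s * (Complex.I * (ω : ℂ) * (1 - (y : ℂ))))
          * (Δ ^ (N + 1))⁻¹ * (1 + Complex.I * (ω : ℂ))⁻¹ := by
    field_simp
    ring
  have key : (1 + (1 - (y : ℂ)) *
            ((((N : ℂ) * (1 - (y : ℂ)) * (1 + Complex.I * (ω : ℂ)) + 1) * s - 1) *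
              (Δ ^ (N + 1))⁻¹)) * (1 + Complex.I * (ω : ℂ))⁻¹
      = (y : ℂ) * (Δ ^ (N + 1))⁻¹ * (1 + Complex.I * (ω : ℂ))⁻¹
        + ((N : ℂ) * (1 - (y : ℂ)) + 1) * (1 - (y : ℂ)) * s * (Δ ^ (N + 1))⁻¹ := by
    rw [← sub_eq_zero, key2, hgs, sub_self, zero_mul, zero_mul]
  rw [key]
  set A : ℝ := norm Δ with hAdef
  set B : ℝ := norm (1 + Complex.I * (ω : ℂ)) with hBdef
  have hA0 : (0:ℝ) < A := by linarith
  have hB0' : (0:ℝ) < B := by linarith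
  have hANpos : (0:ℝ) < A ^ (N + 1) := by positivity
  have hsb : norm s ≤ ((N:ℝ) + 1) * A ^ N := by
    calc norm s ≤ ∑ i ∈ Finset.range (N + 1), norm (Δ ^ i) :=
          norm_sum_le _ _
      _ = ∑ i ∈ Finset.range (N + 1), A ^ i := by simp [norm_pow, hAdef]
      _ ≤ ∑ i ∈ Finset.range (N + 1), A ^ N := by
          apply Finset.sum_le_sum
          intro i hi
          exact pow_le_pow_right₀ (le_of_lt hA) (Finset.mem_range_succ_iff.mp hi)
      _ = ((N:ℝ) + 1) * A ^ N := by
          simp [Finset.sum_const, nsmul_eq_mul]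
  have hc1 : ((N : ℂ) * (1 - (y : ℂ)) + 1) = (((N : ℝ) * (1 - y) + 1 : ℝ) : ℂ) := by
    push_cast; ring
  have hc2 : (1 - (y : ℂ)) = (((1 - y : ℝ)) : ℂ) := by push_cast; ring
  have e1 : norm ((y : ℂ) * (Δ ^ (N + 1))⁻¹ * (1 + Complex.I * (ω : ℂ))⁻¹)
      = y * (A ^ (N + 1))⁻¹ * B⁻¹ := by
    rw [norm_mul, norm_mul, norm_inv, norm_inv, norm_pow, Complex.norm_real, Real.norm_eq_abs,
      abs_of_pos hy0]
  have e2 : norm (((N : ℂ) * (1 - (y : ℂ)) + 1) * (1 - (y : ℂ)) * s * (Δ ^ (N + 1))⁻¹)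
      = ((N : ℝ) * (1 - y) + 1) * (1 - y) * norm s * (A ^ (N + 1))⁻¹ := by
    rw [norm_mul, norm_mul, norm_mul, norm_inv, norm_pow, hc1, hc2,
      Complex.norm_real, Real.norm_eq_abs, Complex.norm_real, Real.norm_eq_abs, abs_of_pos, abs_of_pos]
    · linarith
    · have : (0:ℝ) ≤ (N:ℝ) * (1 - y) := mul_nonneg (Nat.cast_nonneg N) (by linarith)
      linarith
  have hCpos : (0:ℝ) < ((N : ℝ) * (1 - y) + 1) * (1 - y) := by
    have : (0:ℝ) ≤ (N:ℝ) * (1 - y) := mul_nonneg (Nat.cast_nonneg N) (by linarith)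
    nlinarith
  have hinvA : A⁻¹ < 1 := by
    rw [inv_lt_one₀ hA0]; exact hA
  have h1 : norm s * (A ^ (N + 1))⁻¹ < (N : ℝ) + 1 := by
    have step1 : norm s * (A ^ (N + 1))⁻¹ ≤ ((N:ℝ) + 1) * A ^ N * (A ^ (N + 1))⁻¹ :=
      mul_le_mul_of_nonneg_right hsb (by positivity)
    have heq : ((N:ℝ) + 1) * A ^ N * (A ^ (N + 1))⁻¹ = ((N:ℝ) + 1) * A⁻¹ := by
      rw [pow_succ]
      field_simp
    have step2 : ((N:ℝ) + 1) * A⁻¹ < ((N:ℝ) + 1) * 1 := by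
      apply mul_lt_mul_of_pos_left hinvA
      positivity
    rw [heq] at step1
    linarith
  have t2 : ((N : ℝ) * (1 - y) + 1) * (1 - y) * norm s * (A ^ (N + 1))⁻¹
      < ((N : ℝ) * (1 - y) + 1) * (1 - y) * ((N : ℝ) + 1) := by
    have := mul_lt_mul_of_pos_left h1 hCpos
    calc ((N : ℝ) * (1 - y) + 1) * (1 - y) * norm s * (A ^ (N + 1))⁻¹
        = ((N : ℝ) * (1 - y) + 1) * (1 - y) * (norm s * (A ^ (N + 1))⁻¹) := by ring
      _ < _ := this
  have hinvAN : (A ^ (N + 1))⁻¹ < 1 := by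
    rw [inv_lt_one₀ hANpos]
    exact one_lt_pow₀ hA (by omega)
  have hinvB : B⁻¹ < 1 := by
    rw [inv_lt_one₀ hB0']; exact hB
  have t1 : y * (A ^ (N + 1))⁻¹ * B⁻¹ < y := by
    have hiB : (0:ℝ) ≤ B⁻¹ := by positivity
    have hm : (A ^ (N + 1))⁻¹ * B⁻¹ < 1 := by
      calc (A ^ (N + 1))⁻¹ * B⁻¹ ≤ 1 * B⁻¹ := mul_le_mul_of_nonneg_right hinvAN.le hiB
        _ = B⁻¹ := one_mul _
        _ < 1 := hinvB
    calc y * (A ^ (N + 1))⁻¹ * B⁻¹ = y * ((A ^ (N + 1))⁻¹ * B⁻¹) := by ring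
      _ < y * 1 := mul_lt_mul_of_pos_left hm hy0
      _ = y := mul_one y
  have tri := norm_add_le ((y : ℂ) * (Δ ^ (N + 1))⁻¹ * (1 + Complex.I * (ω : ℂ))⁻¹)
    (((N : ℂ) * (1 - (y : ℂ)) + 1) * (1 - (y : ℂ)) * s * (Δ ^ (N + 1))⁻¹)
  rw [e1, e2] at tri
  have hfin : y + ((N : ℝ) * (1 - y) + 1) * (1 - y) * ((N : ℝ) + 1)
      = 1 + (N : ℝ) * (1 - y) + (N : ℝ) * ((N : ℝ) + 1) * (1 - y) ^ 2 := by ring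
  linarith
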